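/- Desnanot–Jacobi (Dodgson condensation) identity: for an n×n matrix M over a commutative ring (n ≥ 2), det(M)·det(M with first and last rows and first and last columns removed) = det(M with first row and first column removed)·det(M with last row and last column removed) − det(M with first row and last column removed)·det(M with last row and first column removed). -/

import Mathlib

/-!
STATEMENT 11. Desnanot–Jacobi (Dodgson condensation): for an n×n matrix M
(n ≥ 2) over a commutative ring,
det(M)·det(M^{1,n}_{1,n}) = det(M^1_1)·det(M^n_n) − det(M^1_n)·det(M^n_1),
where superscripts/subscripts indicate deleted rows/columns.

We write n = m + 2.  Deleting the first row corresponds to re-indexing rows by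
`Fin.succ`, deleting the last row to `Fin.castSucc`, and deleting both the
first and last to `fun i => i.succ.castSucc`.
-/

open Matrix

namespace DJaux

variable {R : Type*} [CommRing R]

lemma updateColumn_comm {n : Type*} [DecidableEq n] [Fintype n]
    (A : Matrix n n R) {i j : n} (h : i ≠ j) (u v : n → R) :
    (A.updateCol i u).updateCol j v = (A.updateCol j v).updateCol i u := by
  ext r s
  simp only [updateCol_apply]
  split_ifs with h1 h2 <;> simp_all

lemma cramer_decomp {k : ℕ} (A : Matrix (Fin k) (Fin k) R) (v : Fin k → R) (j : Fin k) :
    cramer A v j = ∑ i, v i * (A.updateCol j (Pi.single i 1)).det := by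
  have hv : v = ∑ i, v i • (Pi.single i 1 : Fin k → R) := by
    funext j'
    simp [Finset.sum_apply, Pi.single_apply]
  conv_lhs => rw [hv]
  rw [map_sum]
  simp [Finset.sum_apply, cramer_apply]

end DJaux

namespace DJaux
variable {R : Type*} [CommRing R]

lemma h0L (m : ℕ) : (0 : Fin (m + 2)) ≠ Fin.last (m + 1) := by
  simp [Fin.ext_iff]

lemma detP (m : ℕ) :
    ((((1 : Matrix (Fin (m + 2)) (Fin (m + 2)) R).updateCol (Fin.last (m + 1))
        (Pi.single 0 1)).updateCol 0 (Pi.single (Fin.last (m + 1)) 1))).det = -1 := by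
  have h := h0L m
  have hP : (((1 : Matrix (Fin (m + 2)) (Fin (m + 2)) R).updateCol (Fin.last (m + 1))
        (Pi.single 0 1)).updateCol 0 (Pi.single (Fin.last (m + 1)) 1))
      = (1 : Matrix (Fin (m + 2)) (Fin (m + 2)) R).submatrix id (Equiv.swap 0 (Fin.last (m + 1))) := by
    ext r s
    simp only [updateCol_apply, submatrix_apply, id_eq, one_apply, Pi.single_apply,
      Equiv.swap_apply_def]
    split_ifs <;> simp_all <;> omega
  rw [hP, det_permute', Equiv.Perm.sign_swap h, det_one]
  simp

lemma detB (m : ℕ) (u v : Fin (m + 2) → R) :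
    (((1 : Matrix (Fin (m + 2)) (Fin (m + 2)) R).updateCol 0 u).updateCol
        (Fin.last (m + 1)) v).det
      = u 0 * v (Fin.last (m + 1)) - u (Fin.last (m + 1)) * v 0 := by
  set L := Fin.last (m + 1) with hL
  have h : (0 : Fin (m + 2)) ≠ L := h0L m
  rw [← cramer_apply, cramer_decomp]
  have key : ∀ i : Fin (m + 2),
      (((1 : Matrix (Fin (m + 2)) (Fin (m + 2)) R).updateCol 0 u).updateCol L
          (Pi.single i 1)).det
        = if i = 0 then -u L else if i = L then u 0 else 0 := by
    intro i
    by_cases hi0 : i = 0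
    · subst hi0
      rw [if_pos rfl]
      rw [updateColumn_comm _ h]
      rw [← cramer_apply, cramer_decomp]
      rw [Finset.sum_eq_single L]
      · rw [detP]
        ring
      · intro k _ hk
        by_cases hk0 : k = 0
        · subst hk0
          rw [det_zero_of_column_eq h]
          · ring
          · intro r
            simp [updateCol_apply, h, h.symm]
        · rw [det_zero_of_column_eq (Ne.symm hk0)]
          · ring
          · intro r
            simp [updateCol_apply, hk0, hk, Ne.symm hk0, Ne.symm hk, one_apply,
              Pi.single_apply]
      · simp
    · by_cases hiL : i = L
      · subst hiL
        rw [if_neg hi0, if_pos rfl]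
        have : ((1 : Matrix (Fin (m + 2)) (Fin (m + 2)) R).updateCol 0 u).updateCol L
            (Pi.single L 1) = (1 : Matrix (Fin (m + 2)) (Fin (m + 2)) R).updateCol 0 u := by
          ext r s
          by_cases hs : s = L
          · subst hs
            simp [updateCol_apply, h.symm, one_apply, Pi.single_apply]
          · simp [updateCol_apply, hs]
        rw [this, ← cramer_apply, cramer_one]
        rfl
      · rw [if_neg hi0, if_neg hiL]
        refine det_zero_of_column_eq hiL ?_
        intro r
        simp [updateCol_apply, hi0, hiL, one_apply, Pi.single_apply]
  simp only [key]
  have split : ∀ x : Fin (m + 2),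
      (v x * if x = 0 then -u L else if x = L then u 0 else 0)
        = (if x = 0 then -(v 0 * u L) else 0) + (if x = L then v L * u 0 else 0) := by
    intro x
    split_ifs with h1 h2 <;> simp_all <;> ring
  simp only [split, Finset.sum_add_distrib, Finset.sum_ite_eq' Finset.univ,
    Finset.mem_univ, if_true]
  ring

end DJaux

namespace DJaux
variable {R : Type*} [CommRing R]

lemma detD (m : ℕ) (M : Matrix (Fin (m + 2)) (Fin (m + 2)) R) :
    ((M.updateCol 0 (Pi.single 0 1)).updateCol (Fin.last (m + 1))
        (Pi.single (Fin.last (m + 1)) 1)).det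
      = (M.submatrix (fun i : Fin m => i.succ.castSucc)
          (fun j : Fin m => j.succ.castSucc)).det := by
  set L := Fin.last (m + 1) with hL
  have h : (0 : Fin (m + 2)) ≠ L := h0L m
  rw [det_succ_column_zero, Finset.sum_eq_single 0]
  · -- main term
    have hD00 : ((M.updateCol 0 (Pi.single 0 1)).updateCol L (Pi.single L 1)) 0 0 = 1 := by
      simp [updateCol_apply, h, Pi.single_apply]
    rw [hD00]
    rw [updateColumn_comm _ h]
    rw [show (Fin.succ : Fin (m+1) → Fin (m+2)) = (0 : Fin (m + 2)).succAbove from rfl]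
    rw [submatrix_updateCol_succAbove]
    have hsub : (M.updateCol L (Pi.single L 1)).submatrix
          ((0 : Fin (m + 2)).succAbove) ((0 : Fin (m + 2)).succAbove)
        = (M.submatrix Fin.succ Fin.succ).updateCol (Fin.last m)
            (Pi.single (Fin.last m) 1) := by
      ext i j
      by_cases hj : j = Fin.last m
      · subst hj
        simp [updateCol_apply, Pi.single_apply, hL, ← Fin.succ_last, Fin.succ_inj]
      · have hne : Fin.succ j ≠ L := by
          rw [hL, ← Fin.succ_last]
          exact fun hc => hj (Fin.succ_inj.mp hc)
        simp [updateCol_apply, hj, hne]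
    rw [hsub]
    rw [det_succ_column _ (Fin.last m), Finset.sum_eq_single (Fin.last m)]
    · have hentry : ((M.submatrix Fin.succ Fin.succ).updateCol (Fin.last m)
          (Pi.single (Fin.last m) 1)) (Fin.last m) (Fin.last m) = 1 := by
        simp [updateCol_apply]
      rw [hentry, submatrix_updateCol_succAbove, Fin.succAbove_last,
        submatrix_submatrix]
      have : (-1 : R) ^ ((Fin.last m : ℕ) + (Fin.last m : ℕ)) = 1 := by
        rw [← two_mul]
        exact Even.neg_one_pow ⟨(Fin.last m : ℕ), by ring⟩
      rw [this]
      have hcomp : (Fin.succ ∘ Fin.castSucc : Fin m → Fin (m + 2))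
          = fun i : Fin m => i.succ.castSucc := by
        funext i
        exact Fin.succ_castSucc i
      rw [hcomp]
      simp
    · intro i _ hi
      have : ((M.submatrix Fin.succ Fin.succ).updateCol (Fin.last m)
          (Pi.single (Fin.last m) 1)) i (Fin.last m) = 0 := by
        simp [updateCol_apply, Pi.single_apply, hi]
      rw [this]
      ring
    · simp
  · intro i _ hi
    have : ((M.updateCol 0 (Pi.single 0 1)).updateCol L (Pi.single L 1)) i 0 = 0 := by
      simp [updateCol_apply, h, Pi.single_apply, hi]
    rw [this]
    ring
  · simp

end DJaux

namespace DJaux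
variable {R : Type*} [CommRing R]


lemma key (m : ℕ) (M : Matrix (Fin (m + 2)) (Fin (m + 2)) R) :
    M.det * (M.det *
        (M.submatrix (fun i : Fin m => i.succ.castSucc)
          (fun j : Fin m => j.succ.castSucc)).det) =
      M.det * ((M.submatrix Fin.succ Fin.succ).det *
          (M.submatrix Fin.castSucc Fin.castSucc).det -
        (M.submatrix Fin.succ Fin.castSucc).det *
          (M.submatrix Fin.castSucc Fin.succ).det) := by
  set L := Fin.last (m + 1) with hL
  have h : (0 : Fin (m + 2)) ≠ L := h0L m
  set u : Fin (m + 2) → R := fun i => M.adjugate i 0 with hu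
  set v : Fin (m + 2) → R := fun i => M.adjugate i L with hv
  set B : Matrix (Fin (m + 2)) (Fin (m + 2)) R :=
    ((1 : Matrix (Fin (m + 2)) (Fin (m + 2)) R).updateCol 0 u).updateCol L v with hB
  have hMB : M * B = (M.updateCol 0 (M.det • (Pi.single 0 1 : Fin (m + 2) → R))).updateCol L
      (M.det • (Pi.single L 1 : Fin (m + 2) → R)) := by
    ext i j
    rw [mul_apply]
    by_cases hjL : j = L
    · subst hjL
      have hcol : ∀ k, B k L = M.adjugate k L := by
        intro k; simp [hB, updateCol_apply, hv]
      simp only [hcol]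
      have hma := congrFun (congrFun (mul_adjugate M) i) L
      rw [mul_apply] at hma
      rw [hma]
      simp [updateCol_apply, Matrix.one_apply, Pi.single_apply, Matrix.smul_apply,
        smul_eq_mul]
    · by_cases hj0 : j = 0
      · subst hj0
        have hcol : ∀ k, B k 0 = M.adjugate k 0 := by
          intro k; simp [hB, updateCol_apply, h, Ne.symm h, hu]
        simp only [hcol]
        have hma := congrFun (congrFun (mul_adjugate M) i) 0
        rw [mul_apply] at hma
        rw [hma]
        simp [updateCol_apply, h, Ne.symm h, Matrix.one_apply, Pi.single_apply,
          Matrix.smul_apply, smul_eq_mul]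
      · have hcol : ∀ k, B k j = (1 : Matrix (Fin (m + 2)) (Fin (m + 2)) R) k j := by
          intro k; simp [hB, updateCol_apply, hjL, hj0]
        simp only [hcol]
        simp [Matrix.one_apply, updateCol_apply, hjL, hj0, mul_ite, mul_one, mul_zero,
          Finset.sum_ite_eq, Finset.sum_ite_eq']
  have hdetMB : (M * B).det = M.det * (M.det *
      (M.submatrix (fun i : Fin m => i.succ.castSucc)
          (fun j : Fin m => j.succ.castSucc)).det) := by
    rw [hMB, det_updateCol_smul, updateColumn_comm _ h, det_updateCol_smul,
      updateColumn_comm _ (Ne.symm h), detD]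
  have hsign : (-1 : R) ^ (m + 1) * (-1 : R) ^ (m + 1) = 1 := by
    rw [← pow_add]
    exact Even.neg_one_pow ⟨m + 1, by ring⟩
  have adj00 : M.adjugate 0 0 = (M.submatrix Fin.succ Fin.succ).det := by
    rw [adjugate_fin_succ_eq_det_submatrix]
    simp
  have adjLL : M.adjugate L L = (M.submatrix Fin.castSucc Fin.castSucc).det := by
    rw [adjugate_fin_succ_eq_det_submatrix, hL, Fin.succAbove_last]
    have hev : (-1 : R) ^ ((Fin.last (m + 1) : ℕ) + (Fin.last (m + 1) : ℕ)) = 1 :=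
      Even.neg_one_pow ⟨m + 1, by simp⟩
    rw [hev, one_mul]
  have adj0L : M.adjugate 0 L = (-1 : R) ^ (m + 1) * (M.submatrix Fin.castSucc Fin.succ).det := by
    rw [adjugate_fin_succ_eq_det_submatrix, hL, Fin.succAbove_last, Fin.succAbove_zero]
    simp
  have adjL0 : M.adjugate L 0 = (-1 : R) ^ (m + 1) * (M.submatrix Fin.succ Fin.castSucc).det := by
    rw [adjugate_fin_succ_eq_det_submatrix, hL, Fin.succAbove_last, Fin.succAbove_zero]
    simp
  have hdetB : B.det = (M.submatrix Fin.succ Fin.succ).det *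
          (M.submatrix Fin.castSucc Fin.castSucc).det -
        (M.submatrix Fin.succ Fin.castSucc).det *
          (M.submatrix Fin.castSucc Fin.succ).det := by
    rw [hB, detB]
    show M.adjugate 0 0 * M.adjugate L L - M.adjugate L 0 * M.adjugate 0 L = _
    rw [adj00, adjLL, adj0L, adjL0]
    linear_combination (-((M.submatrix Fin.succ Fin.castSucc).det *
      (M.submatrix Fin.castSucc Fin.succ).det)) * hsign
  rw [← hdetMB, det_mul, hdetB]

end DJaux

namespace DJaux

lemma generic (m : ℕ) :
    letI S := MvPolynomial (Fin (m + 2) × Fin (m + 2)) ℤ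
    letI X : Matrix (Fin (m + 2)) (Fin (m + 2)) S := Matrix.of fun i j => MvPolynomial.X (i, j)
    X.det *
        (X.submatrix (fun i : Fin m => i.succ.castSucc)
          (fun j : Fin m => j.succ.castSucc)).det =
      (X.submatrix Fin.succ Fin.succ).det *
          (X.submatrix Fin.castSucc Fin.castSucc).det -
        (X.submatrix Fin.succ Fin.castSucc).det *
          (X.submatrix Fin.castSucc Fin.succ).det := by
  set S := MvPolynomial (Fin (m + 2) × Fin (m + 2)) ℤ
  set X : Matrix (Fin (m + 2)) (Fin (m + 2)) S := Matrix.of fun i j => MvPolynomial.X (i, j)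
    with hX
  have hXne : X.det ≠ 0 := by
    intro hzero
    have h1 : (MvPolynomial.eval (fun p : Fin (m + 2) × Fin (m + 2) =>
        if p.1 = p.2 then (1 : ℤ) else 0)) X.det = 1 := by
      rw [RingHom.map_det]
      have : (MvPolynomial.eval (fun p : Fin (m + 2) × Fin (m + 2) =>
          if p.1 = p.2 then (1 : ℤ) else 0)).mapMatrix X = 1 := by
        ext i j
        simp [hX, Matrix.one_apply]
      rw [this, det_one]
    rw [hzero, map_zero] at h1
    exact absurd h1 (by norm_num)
  exact mul_left_cancel₀ hXne (key m X)

end DJaux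

theorem desnanot_jacobi {R : Type*} [CommRing R] (m : ℕ)
    (M : Matrix (Fin (m + 2)) (Fin (m + 2)) R) :
    M.det *
        (M.submatrix (fun i : Fin m => i.succ.castSucc)
          (fun j : Fin m => j.succ.castSucc)).det =
      (M.submatrix Fin.succ Fin.succ).det *
          (M.submatrix Fin.castSucc Fin.castSucc).det -
        (M.submatrix Fin.succ Fin.castSucc).det *
          (M.submatrix Fin.castSucc Fin.succ).det := by
  have hgen := DJaux.generic m
  set ψ : MvPolynomial (Fin (m + 2) × Fin (m + 2)) ℤ →+* R :=
    (MvPolynomial.eval₂Hom (Int.castRingHom R) fun p : Fin (m + 2) × Fin (m + 2) =>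
      M p.1 p.2) with hψ
  have := congrArg ψ hgen
  rw [_root_.map_mul, _root_.map_sub, _root_.map_mul, _root_.map_mul] at this
  simp only [RingHom.map_det] at this
  have hmap : ∀ {k : ℕ} (f g : Fin k → Fin (m + 2)),
      ψ.mapMatrix ((Matrix.of fun i j =>
          (MvPolynomial.X (i, j) : MvPolynomial (Fin (m + 2) × Fin (m + 2)) ℤ)).submatrix f g)
        = M.submatrix f g := by
    intro k f g
    ext i j
    simp [hψ]
  rw [hmap, hmap, hmap, hmap, hmap] at this
  have hM : ψ.mapMatrix (Matrix.of fun i j =>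
      (MvPolynomial.X (i, j) : MvPolynomial (Fin (m + 2) × Fin (m + 2)) ℤ)) = M := by
    ext i j
    simp [hψ]
  rw [hM] at this
  exact this
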